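/- Let U ∈ R^{d×r} and V ∈ R^{d×r} have orthonormal columns, M ∈ R^{d×k} have orthonormal columns, and x ∈ R^k. If ‖U^T M‖ ≤ 1/2 and ‖U U^T − V V^T‖ ≤ 1/4, then ‖(I − V V^T) M x‖ ≥ (1/4)‖x‖. -/

import Mathlib

open Matrix

noncomputable def opNorm {m n : ℕ} (A : Matrix (Fin m) (Fin n) ℝ) : ℝ :=
  ‖LinearMap.toContinuousLinearMap (Matrix.toEuclideanLin A)‖

private lemma mulE {a b c : ℕ} (A : Matrix (Fin a) (Fin b) ℝ) (B : Matrix (Fin b) (Fin c) ℝ)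
    (v : EuclideanSpace ℝ (Fin c)) :
    Matrix.toEuclideanLin (A * B) v = Matrix.toEuclideanLin A (Matrix.toEuclideanLin B v) := by
  simp [Matrix.toEuclideanLin_apply, Matrix.mulVec_mulVec]

private lemma oneE {a : ℕ} (v : EuclideanSpace ℝ (Fin a)) :
    Matrix.toEuclideanLin (1 : Matrix (Fin a) (Fin a) ℝ) v = v := by
  simp [Matrix.toEuclideanLin_apply]

private lemma innerE {a b : ℕ} (A : Matrix (Fin a) (Fin b) ℝ)
    (u : EuclideanSpace ℝ (Fin b)) (v : EuclideanSpace ℝ (Fin a)) :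
    inner ℝ (Matrix.toEuclideanLin A u) v = (inner ℝ u (Matrix.toEuclideanLin Aᵀ v) : ℝ) := by
  have h : Aᵀ = Aᴴ := by
    ext i j; simp [Matrix.conjTranspose_apply]
  rw [h, Matrix.toEuclideanLin_conjTranspose_eq_adjoint, LinearMap.adjoint_inner_right]

private lemma normE_le {a b : ℕ} (A : Matrix (Fin a) (Fin b) ℝ) (v : EuclideanSpace ℝ (Fin b)) :
    ‖Matrix.toEuclideanLin A v‖ ≤ opNorm A * ‖v‖ :=
  (LinearMap.toContinuousLinearMap (Matrix.toEuclideanLin A)).le_opNorm v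

theorem stmt2 {d r k : ℕ} (U V : Matrix (Fin d) (Fin r) ℝ) (M : Matrix (Fin d) (Fin k) ℝ)
    (hU : Uᵀ * U = 1) (hV : Vᵀ * V = 1) (hM : Mᵀ * M = 1)
    (x : EuclideanSpace ℝ (Fin k))
    (hUM : opNorm (Uᵀ * M) ≤ 1 / 2)
    (hUV : opNorm (U * Uᵀ - V * Vᵀ) ≤ 1 / 4) :
    (1 / 4) * ‖x‖ ≤
      ‖Matrix.toEuclideanLin ((1 : Matrix (Fin d) (Fin d) ℝ) - V * Vᵀ)
        (Matrix.toEuclideanLin M x)‖ := by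
  set y := Matrix.toEuclideanLin M x with hy
  set z := Matrix.toEuclideanLin Uᵀ y with hz
  have hnx : (0:ℝ) ≤ ‖x‖ := norm_nonneg x
  -- ‖y‖ = ‖x‖
  have hyx : ‖y‖ = ‖x‖ := by
    have h1 : ‖y‖ ^ 2 = ‖x‖ ^ 2 := by
      rw [← real_inner_self_eq_norm_sq, ← real_inner_self_eq_norm_sq, hy, innerE, ← mulE, hM, oneE]
    have h2 := congrArg Real.sqrt h1
    simpa [Real.sqrt_sq, norm_nonneg] using h2
  -- ‖z‖ ≤ 1/2 ‖x‖
  have hzle : ‖z‖ ≤ 1 / 2 * ‖x‖ := by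
    have : z = Matrix.toEuclideanLin (Uᵀ * M) x := by rw [hz, hy, mulE]
    rw [this]
    calc ‖Matrix.toEuclideanLin (Uᵀ * M) x‖ ≤ opNorm (Uᵀ * M) * ‖x‖ := normE_le _ _
      _ ≤ 1 / 2 * ‖x‖ := by nlinarith
  -- Pythagoras : ‖(1 - UUᵀ) y‖² = ‖y‖² - ‖z‖²
  have hdecomp : Matrix.toEuclideanLin ((1 : Matrix (Fin d) (Fin d) ℝ) - U * Uᵀ) y
      = y - Matrix.toEuclideanLin U z := by
    have : Matrix.toEuclideanLin ((1 : Matrix (Fin d) (Fin d) ℝ) - U * Uᵀ) y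
        = Matrix.toEuclideanLin (1 : Matrix (Fin d) (Fin d) ℝ) y
          - Matrix.toEuclideanLin (U * Uᵀ) y := by
      simp [map_sub, LinearMap.sub_apply]
    rw [this, oneE, mulE]
  have hinner1 : (inner ℝ y (Matrix.toEuclideanLin U z) : ℝ) = ‖z‖ ^ 2 := by
    rw [real_inner_comm, innerE, ← hz, real_inner_self_eq_norm_sq]
  have hinner2 : (inner ℝ (Matrix.toEuclideanLin U z) (Matrix.toEuclideanLin U z) : ℝ) = ‖z‖ ^ 2 := by
    rw [innerE, ← mulE, hU, oneE, real_inner_self_eq_norm_sq]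
  have hpyth : ‖Matrix.toEuclideanLin ((1 : Matrix (Fin d) (Fin d) ℝ) - U * Uᵀ) y‖ ^ 2
      = ‖y‖ ^ 2 - ‖z‖ ^ 2 := by
    have hinner3 : (inner ℝ (Matrix.toEuclideanLin U z) y : ℝ) = ‖z‖ ^ 2 := by
      rw [real_inner_comm]; exact hinner1
    rw [hdecomp, ← real_inner_self_eq_norm_sq, inner_sub_sub_self,
      real_inner_self_eq_norm_sq, hinner1, hinner2]
    linarith [hinner3]
  -- so ‖(1 - UUᵀ) y‖ ≥ 1/2 ‖x‖
  have hU2 : 1 / 2 * ‖x‖ ≤ ‖Matrix.toEuclideanLin ((1 : Matrix (Fin d) (Fin d) ℝ) - U * Uᵀ) y‖ := by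
    have hsq : (1 / 2 * ‖x‖) ^ 2 ≤
        ‖Matrix.toEuclideanLin ((1 : Matrix (Fin d) (Fin d) ℝ) - U * Uᵀ) y‖ ^ 2 := by
      rw [hpyth, hyx]
      nlinarith [norm_nonneg z]
    nlinarith [norm_nonneg (Matrix.toEuclideanLin ((1 : Matrix (Fin d) (Fin d) ℝ) - U * Uᵀ) y),
      mul_nonneg (by norm_num : (0:ℝ) ≤ 1/2) hnx]
  -- triangle inequality step
  have hsplit : Matrix.toEuclideanLin ((1 : Matrix (Fin d) (Fin d) ℝ) - U * Uᵀ) y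
      = Matrix.toEuclideanLin ((1 : Matrix (Fin d) (Fin d) ℝ) - V * Vᵀ) y
        - Matrix.toEuclideanLin (U * Uᵀ - V * Vᵀ) y := by
    have h : ((1 : Matrix (Fin d) (Fin d) ℝ) - U * Uᵀ)
        = ((1 : Matrix (Fin d) (Fin d) ℝ) - V * Vᵀ) - (U * Uᵀ - V * Vᵀ) := by abel
    rw [h, map_sub, LinearMap.sub_apply]
  have htri : ‖Matrix.toEuclideanLin ((1 : Matrix (Fin d) (Fin d) ℝ) - U * Uᵀ) y‖
      ≤ ‖Matrix.toEuclideanLin ((1 : Matrix (Fin d) (Fin d) ℝ) - V * Vᵀ) y‖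
        + ‖Matrix.toEuclideanLin (U * Uᵀ - V * Vᵀ) y‖ := by
    rw [hsplit]; exact norm_sub_le _ _
  have hpert : ‖Matrix.toEuclideanLin (U * Uᵀ - V * Vᵀ) y‖ ≤ 1 / 4 * ‖x‖ := by
    calc ‖Matrix.toEuclideanLin (U * Uᵀ - V * Vᵀ) y‖
        ≤ opNorm (U * Uᵀ - V * Vᵀ) * ‖y‖ := normE_le _ _
      _ ≤ 1 / 4 * ‖x‖ := by rw [hyx]; nlinarith
  linarith
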